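/- Executing the scaffold solution of the constructed parallel token swapping instance from the initial token placement brings each item token to a vertex that is the target vertex of some item token; equivalently, after the K rounds of the scaffold solution, the set of vertices occupied by the item tokens is exactly {r} ∪ {s^{a(i,n)}_1 : 1 ≤ i ≤ m}. -/

import Mathlib

namespace ParallelTS

/-!
Construction (parallel): given a Star STS instance with slots `1,…,m` (encoded as
`Fin m`), items `0,…,m` (encoded as `Option (Fin m)`, `none` = item 0), target
permutation `π` and swap sequence `s₁,…,sₙ` (`s : Fin n → Fin m`), set `K = 8n` and
build a subdivided star with root `r` and branches: swap branches `w¹,…,wⁿ`, slot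
branches `s¹,…,s^{m+n}` and garbage branches `g`, `g′`, each a path of `K` vertices.
-/

/-- The branches: swap branches `wᵗ` (`Sum.inl`), slot branches `sⁱ`
(`Sum.inr (Sum.inl _)`), and the garbage branches `g = Sum.inr (Sum.inr false)` and
`g′ = Sum.inr (Sum.inr true)`. -/
abbrev Branch (m n : ℕ) := Fin n ⊕ Fin (m + n) ⊕ Bool

/-- Vertices of the subdivided star: `none` is the root `r`; `some (b, j)` is the
vertex `b_{j+1}` of branch `b` at distance `j+1` from the root.  (The coordinate `j`
ranges over all of `ℕ`; the graph below only has edges between the root and the first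
`K` vertices of each branch, so the remaining vertices are isolated and carry no
tokens.) -/
abbrev PV (m n : ℕ) := Option (Branch m n × ℕ)

/-- Adjacency generator for the subdivided star with branches of length `K = 8n`. -/
def prel {m n : ℕ} : PV m n → PV m n → Prop
  | none, some (_, j) => j = 0 ∧ 0 < 8 * n
  | some (b, j), some (b', j') => b = b' ∧ j' = j + 1 ∧ j' < 8 * n
  | _, _ => False

/-- The subdivided star, as a simple graph. -/
def PGraph (m n : ℕ) : SimpleGraph (PV m n) := SimpleGraph.fromRel prel

/-- Swap the two values `e.1`, `e.2`. -/
def swapV {V : Type*} [DecidableEq V] (e : V × V) (v : V) : V :=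
  if v = e.1 then e.2 else if v = e.2 then e.1 else v

/-- Trajectory of the vertex `v` under a schedule of rounds, each round being a list
of (disjoint) swaps. -/
def applySched {V : Type*} [DecidableEq V] (sched : List (List (V × V))) (v : V) : V :=
  sched.foldl (fun v R => R.foldl (fun v e => swapV e v) v) v

/-- Two swaps do not share a vertex. -/
def NoShare {V : Type*} (e f : V × V) : Prop :=
  e.1 ≠ f.1 ∧ e.1 ≠ f.2 ∧ e.2 ≠ f.1 ∧ e.2 ≠ f.2

/-- Apply a sequence of star swaps (each given by a leaf) to a placement on the star
with center `none` and leaves `some l`. -/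
def starApply {L : Type*} [DecidableEq L] (σ : List L) (f : Option L → Option L) :
    Option L → Option L :=
  σ.foldl (fun g l => fun t => swapV ((none : Option L), some l) (g t)) f

/-- The Star STS instance is a YES instance. -/
def StarSTSYes {L : Type*} [DecidableEq L] (π : Equiv.Perm (Option L)) (σ : List L) : Prop :=
  ∃ σ' : List L, σ'.Sublist σ ∧ starApply σ' id = ⇑π

variable {m n : ℕ}

/-- `a(i,t)`: the index of the slot branch representing slot `i` after `t` steps:
`a(i,0) = i`, and `a(i,t) = a(i,t-1)` for `i ≠ s_t` while `a(s_t,t) = m + t`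
(`1`-indexed; below everything is `0`-indexed). -/
def aFun (s : Fin n → Fin m) : ℕ → Fin m → Fin (m + n)
  | 0, i => ⟨i.val, Nat.lt_of_lt_of_le i.isLt (Nat.le_add_right m n)⟩
  | t + 1, i =>
      if h : t < n then
        (if s ⟨t, h⟩ = i then ⟨m + t, Nat.add_lt_add_left h m⟩ else aFun s t i)
      else aFun s t i

/-- The enforcement tokens are indexed by `(t, r) : Fin n × Fin 4`; the token
`e_{(t,r)}` is `e_d` for the odd number `d = 8t + 2r + 1`. -/
def dOf (t : Fin n) (r : Fin 4) : ℕ := 8 * t.val + 2 * r.val + 1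

/-- The starting branch `x^d` of enforcement token `e_d`, `d = 8t+2r+1`:
`x^{8T-7} = x^{8T-5} = w^T`, `x^{8T-3} = g′`, `x^{8T-1} = s^{m+T}` (where
`T = t+1`). -/
def xB (s : Fin n → Fin m) (t : Fin n) (r : Fin 4) : Branch m n :=
  if r.val ≤ 1 then Sum.inl t
  else if r.val = 2 then Sum.inr (Sum.inr true)
  else Sum.inr (Sum.inl ⟨m + t.val, Nat.add_lt_add_left t.isLt m⟩)

/-- The destination branch `y^d` of enforcement token `e_d`, `d = 8t+2r+1`:
`y^{8T-7} = s^{a(s_T, T-1)}`, `y^{8T-5} = g`, `y^{8T-3} = y^{8T-1} = w^T` (where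
`T = t+1`). -/
def yB (s : Fin n → Fin m) (t : Fin n) (r : Fin 4) : Branch m n :=
  if r.val = 0 then Sum.inr (Sum.inl (aFun s t.val (s t)))
  else if r.val = 1 then Sum.inr (Sum.inr false)
  else Sum.inl t

/-- Initial vertex of item token `o`: the root for item `0`, the vertex `sⁱ₁` for
item `i`. -/
def itemInit (s : Fin n → Fin m) : Option (Fin m) → PV m n
  | none => none
  | some i => some (Sum.inr (Sum.inl (aFun s 0 i)), 0)

/-- Initial vertex of the enforcement token `e_d`, namely `x^d_d`. -/
def enfInit (s : Fin n → Fin m) (t : Fin n) (r : Fin 4) : PV m n :=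
  some (xB s t r, dOf t r - 1)

/-- A vertex initially occupied by an item or enforcement token. -/
def Occupied (s : Fin n → Fin m) (v : PV m n) : Prop :=
  (∃ o : Option (Fin m), itemInit s o = v) ∨
    (∃ tr : Fin n × Fin 4, enfInit s tr.1 tr.2 = v)

/-- The tokens of the parallel instance: item tokens, enforcement tokens, and one
filler token for each initially unoccupied vertex. -/
abbrev PTok (s : Fin n → Fin m) :=
  Option (Fin m) ⊕ (Fin n × Fin 4) ⊕ {v : PV m n // ¬ Occupied s v}

/-- Initial placement of all tokens. -/
def initP (s : Fin n → Fin m) : PTok s → PV m n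
  | Sum.inl o => itemInit s o
  | Sum.inr (Sum.inl (t, r)) => enfInit s t r
  | Sum.inr (Sum.inr v) => v.val

/-- Position of the enforcement token with branches `xb`, `yb` and starting distance
`d` after `τ` rounds of the scaffold solution: it moves one step toward its target in
every round, reaching the root after round `d`. -/
def posE (xb yb : Branch m n) (d τ : ℕ) : PV m n :=
  if τ < d then some (xb, d - τ - 1)
  else if τ = d then none
  else some (yb, τ - d - 1)

/-- The scaffold solution: the `K = 8n`-round schedule whose round `τ+1` swaps each
enforcement token one step along the path toward its target. -/
def scaffold (s : Fin n → Fin m) : List (List (PV m n × PV m n)) :=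
  List.ofFn fun τ : Fin (8 * n) =>
    (List.ofFn fun t : Fin n =>
      List.ofFn fun r : Fin 4 =>
        (posE (xB s t r) (yB s t r) (dOf t r) τ.val,
          posE (xB s t r) (yB s t r) (dOf t r) (τ.val + 1))).flatten

/-- Target placement of all tokens: item token `o` goes to the root if `π o = 0` and
to `s^{a(π o, n)}₁` otherwise; enforcement token `e_d` goes to `y^d_{K-d}`; each
filler token goes to the final vertex of its initial vertex under the scaffold
solution. -/
def tgtP (s : Fin n → Fin m) (π : Equiv.Perm (Option (Fin m))) : PTok s → PV m n
  | Sum.inl o =>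
      (match π o with
        | none => none
        | some i => some (Sum.inr (Sum.inl (aFun s n i)), 0))
  | Sum.inr (Sum.inl (t, r)) => some (yB s t r, 8 * n - dOf t r - 1)
  | Sum.inr (Sum.inr v) => applySched (scaffold s) v.val

/-- `sched` is a solution of the parallel token swapping instance using at most `K`
rounds: at most `K` rounds, every round is a matching of edges of the graph, and the
schedule brings every token from its initial vertex to its target vertex. -/
def IsSolution (s : Fin n → Fin m) (π : Equiv.Perm (Option (Fin m)))
    (K : ℕ) (sched : List (List (PV m n × PV m n))) : Prop :=
  sched.length ≤ K ∧
  (∀ R ∈ sched, (∀ e ∈ R, (PGraph m n).Adj e.1 e.2) ∧ R.Pairwise NoShare) ∧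
  ∀ t : PTok s, applySched sched (initP s t) = tgtP s π t

end ParallelTS

namespace ParallelTS

/-!
STATEMENT 11: Executing the scaffold solution of the constructed parallel token
swapping instance from the initial placement brings each item token to a vertex that
is the target vertex of some item token; equivalently, after the `K` rounds of the
scaffold solution, the set of vertices occupied by the item tokens is exactly
`{r} ∪ {s^{a(i,n)}₁ : 1 ≤ i ≤ m}`.
-/
/-! ### Auxiliary machinery for the proof -/

section FoldSwap

variable {α : Type*} [DecidableEq α]

lemma foldl_swapV_untouched :
    ∀ (L : List (α × α)) (v : α), (∀ e ∈ L, e.1 ≠ v ∧ e.2 ≠ v) →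
      L.foldl (fun v e => swapV e v) v = v := by
  intro L
  induction L with
  | nil => intro v _; rfl
  | cons e L ih =>
    intro v h
    have h1 := h e List.mem_cons_self
    have hs : swapV e v = v := by
      unfold swapV
      rw [if_neg (fun hh => h1.1 hh.symm), if_neg (fun hh => h1.2 hh.symm)]
    simp only [List.foldl_cons, hs]
    exact ih v (fun f hf => h f (List.mem_cons_of_mem _ hf))

lemma foldl_swapV_single :
    ∀ (L : List (α × α)) (v w : α), v ≠ w →
      (∀ e ∈ L, e = (w, v) ∨ (e.1 ≠ v ∧ e.2 ≠ v ∧ e.1 ≠ w ∧ e.2 ≠ w)) →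
      L.countP (fun e => decide (e = (w, v))) = 1 →
      L.foldl (fun v e => swapV e v) v = w := by
  intro L
  induction L with
  | nil => intro v w _ _ hc; simp at hc
  | cons e L ih =>
    intro v w hvw h hc
    rcases h e List.mem_cons_self with he | he
    · subst he
      rw [List.countP_cons] at hc
      have hc0 : L.countP (fun e => decide (e = (w, v))) = 0 := by
        simp only [decide_eq_true_eq, if_pos rfl] at hc
        simpa using hc
      rw [List.countP_eq_zero] at hc0
      have hmiss : ∀ f ∈ L, f.1 ≠ w ∧ f.2 ≠ w := by
        intro f hf
        rcases h f (List.mem_cons_of_mem _ hf) with h' | h'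
        · exact absurd (by simp [h']) (hc0 f hf)
        · exact ⟨h'.2.2.1, h'.2.2.2⟩
      have hs : swapV (w, v) v = w := by
        unfold swapV
        by_cases hv : v = w
        · exact absurd hv hvw
        · rw [if_neg hv, if_pos rfl]
      simp only [List.foldl_cons, hs]
      exact foldl_swapV_untouched L w hmiss
    · rw [List.countP_cons] at hc
      have hne : ¬ (e = (w, v)) := by
        intro hh; exact he.2.1 (by rw [hh])
      simp only [decide_eq_true_eq] at hc
      rw [if_neg hne] at hc
      have hs : swapV e v = v := by
        unfold swapV
        rw [if_neg (fun hh => he.1 hh.symm), if_neg (fun hh => he.2.1 hh.symm)]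
      simp only [List.foldl_cons, hs]
      exact ih v w hvw (fun f hf => h f (List.mem_cons_of_mem _ hf)) (by omega)

lemma countP_ofFn {β : Type*} (p : β → Bool) :
    ∀ {k : ℕ} (f : Fin k → β),
      (List.ofFn f).countP p = ∑ b : Fin k, (if p (f b) then 1 else 0) := by
  intro k
  induction k with
  | zero => intro f; simp
  | succ k ih =>
    intro f
    rw [List.ofFn_succ, List.countP_cons, ih, Fin.sum_univ_succ]
    split_ifs <;> omega

lemma roundFold_untouched {N M : ℕ} (E : Fin N → Fin M → α × α) (v : α)
    (h : ∀ a b, (E a b).1 ≠ v ∧ (E a b).2 ≠ v) :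
    ((List.ofFn fun a => List.ofFn fun b => E a b).flatten).foldl
      (fun v e => swapV e v) v = v := by
  apply foldl_swapV_untouched
  intro e he
  rw [List.mem_flatten] at he
  obtain ⟨l, hl, hel⟩ := he
  rw [List.mem_ofFn] at hl
  obtain ⟨a, rfl⟩ := hl
  rw [List.mem_ofFn] at hel
  obtain ⟨b, rfl⟩ := hel
  exact h a b

lemma roundFold_single {N M : ℕ} (E : Fin N → Fin M → α × α) (v w : α) (hvw : v ≠ w)
    (a₀ : Fin N) (b₀ : Fin M) (hE : E a₀ b₀ = (w, v))
    (h : ∀ a b, ¬(a = a₀ ∧ b = b₀) →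
      (E a b).1 ≠ v ∧ (E a b).2 ≠ v ∧ (E a b).1 ≠ w ∧ (E a b).2 ≠ w) :
    ((List.ofFn fun a => List.ofFn fun b => E a b).flatten).foldl
      (fun v e => swapV e v) v = w := by
  have hother : ∀ a b, ¬(a = a₀ ∧ b = b₀) → ¬ (E a b = (w, v)) := by
    intro a b hab heq
    exact (h a b hab).2.1 (by rw [heq])
  apply foldl_swapV_single _ _ _ hvw
  · intro e he
    rw [List.mem_flatten] at he
    obtain ⟨l, hl, hel⟩ := he
    rw [List.mem_ofFn] at hl
    obtain ⟨a, rfl⟩ := hl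
    rw [List.mem_ofFn] at hel
    obtain ⟨b, rfl⟩ := hel
    by_cases hab : a = a₀ ∧ b = b₀
    · left; rw [hab.1, hab.2]; exact hE
    · right; exact h a b hab
  · rw [List.countP_flatten, List.map_ofFn, List.sum_ofFn]
    have hinner : ∀ a : Fin N,
        ((fun l => List.countP (fun e => decide (e = (w, v))) l) ∘
          (fun a => List.ofFn fun b => E a b)) a = if a = a₀ then 1 else 0 := by
      intro a
      simp only [Function.comp_apply, countP_ofFn]
      by_cases ha : a = a₀
      · subst ha
        rw [if_pos rfl]
        have hterm : ∀ b : Fin M, b ∈ (Finset.univ : Finset (Fin M)) →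
            (if (decide (E a b = (w, v)) : Bool) then (1:ℕ) else 0) =
              if b = b₀ then 1 else 0 := by
          intro b _
          by_cases hb : b = b₀
          · subst hb; simp [hE]
          · simp [hother a b (by tauto), hb]
        rw [Finset.sum_congr rfl hterm]
        simp
      · rw [if_neg ha]
        apply Finset.sum_eq_zero
        intro b _
        simp [hother a b (by tauto)]
    rw [Finset.sum_congr rfl (fun a _ => hinner a)]
    simp

end FoldSwap
section PosChar

variable {m n : ℕ}

lemma posE_lt {xb yb : Branch m n} {d T : ℕ} (h : T < d) :
    posE xb yb d T = some (xb, d - T - 1) := by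
  unfold posE; rw [if_pos h]

lemma posE_eqd {xb yb : Branch m n} {d T : ℕ} (h : T = d) :
    posE xb yb d T = none := by
  unfold posE; rw [if_neg (by omega), if_pos h]

lemma posE_gtd {xb yb : Branch m n} {d T : ℕ} (h : d < T) :
    posE xb yb d T = some (yb, T - d - 1) := by
  unfold posE; rw [if_neg (by omega), if_neg (by omega)]

lemma posE_eq_none_iff {xb yb : Branch m n} {d T : ℕ} :
    posE xb yb d T = none ↔ T = d := by
  unfold posE; split_ifs with h1 h2 <;> simp <;> omega

lemma posE_none_char {s : Fin n → Fin m} {t' : Fin n} {r' : Fin 4} {T : ℕ}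
    (heq : posE (xB s t' r') (yB s t' r') (dOf t' r') T = none) :
    T = 8 * t'.val + 2 * r'.val + 1 := by
  rw [posE_eq_none_iff] at heq
  unfold dOf at heq
  exact heq

lemma posE_inl_char {s : Fin n → Fin m} {t' : Fin n} {r' : Fin 4} {T j : ℕ} {tt : Fin n}
    (heq : posE (xB s t' r') (yB s t' r') (dOf t' r') T = some (Sum.inl tt, j)) :
    t'.val = tt.val ∧
      ((r'.val ≤ 1 ∧ T + j + 1 = 8 * t'.val + 2 * r'.val + 1) ∨
        (2 ≤ r'.val ∧ T = 8 * t'.val + 2 * r'.val + 2 + j)) := by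
  unfold posE at heq
  split_ifs at heq with h1 h2
  · simp only [Option.some.injEq, Prod.mk.injEq] at heq
    obtain ⟨hb, hj⟩ := heq
    unfold xB at hb
    split_ifs at hb with hr1 hr2
    simp only [Sum.inl.injEq] at hb
    refine ⟨by rw [hb], Or.inl ⟨hr1, ?_⟩⟩
    unfold dOf at h1 hj
    omega
  · simp only [Option.some.injEq, Prod.mk.injEq] at heq
    obtain ⟨hb, hj⟩ := heq
    unfold yB at hb
    split_ifs at hb with hr0 hr1
    simp only [Sum.inl.injEq] at hb
    refine ⟨by rw [hb], Or.inr ⟨by omega, ?_⟩⟩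
    unfold dOf at h1 h2 hj
    omega

lemma posE_slot_char {s : Fin n → Fin m} {t' : Fin n} {r' : Fin 4} {T j : ℕ}
    {A : Fin (m + n)}
    (heq : posE (xB s t' r') (yB s t' r') (dOf t' r') T = some (Sum.inr (Sum.inl A), j)) :
    (r'.val = 0 ∧ A = aFun s t'.val (s t') ∧ T = 8 * t'.val + 2 + j) ∨
      (r'.val = 3 ∧ A.val = m + t'.val ∧ T + j + 1 = 8 * t'.val + 7) := by
  have h4 := r'.isLt
  unfold posE at heq
  split_ifs at heq with h1 h2
  · simp only [Option.some.injEq, Prod.mk.injEq] at heq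
    obtain ⟨hb, hj⟩ := heq
    unfold xB at hb
    split_ifs at hb with hr1 hr2
    · simp at hb
    · have hr3 : r'.val = 3 := by omega
      simp only [Sum.inr.injEq, Sum.inl.injEq] at hb
      have hA : A.val = m + t'.val := by rw [← hb]
      refine Or.inr ⟨hr3, hA, ?_⟩
      unfold dOf at h1 hj
      omega
  · simp only [Option.some.injEq, Prod.mk.injEq] at heq
    obtain ⟨hb, hj⟩ := heq
    unfold yB at hb
    split_ifs at hb with hr0 hr1
    · simp only [Sum.inr.injEq, Sum.inl.injEq] at hb
      refine Or.inl ⟨hr0, hb.symm, ?_⟩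
      unfold dOf at h1 h2 hj
      omega
    · simp at hb

lemma aFun_val_lt (s : Fin n → Fin m) (t : ℕ) (i : Fin m) :
    (aFun s t i).val < m + t := by
  induction t with
  | zero =>
    have := i.isLt
    simp only [aFun]
    show i.val < m + 0
    omega
  | succ t ih =>
    simp only [aFun]
    split_ifs with h1 h2
    · show m + t < m + (t + 1); omega
    · omega
    · omega

lemma aFun_inj (s : Fin n → Fin m) (t : ℕ) : Function.Injective (aFun s t) := by
  induction t with
  | zero =>
    intro i j h
    simp only [aFun] at h
    simp only [Fin.mk.injEq] at h
    exact Fin.ext h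
  | succ t ih =>
    intro i j h
    simp only [aFun] at h
    split_ifs at h with hn hi hj hj
    · exact hi.symm.trans hj
    · have h1 := aFun_val_lt s t j
      have h2 : m + t = (aFun s t j).val := congrArg Fin.val h
      omega
    · have h1 := aFun_val_lt s t i
      have h2 : (aFun s t i).val = m + t := congrArg Fin.val h
      omega
    · exact ih h
    · exact ih h

lemma aFun_succ_self (s : Fin n → Fin m) {t : ℕ} (ht : t < n) :
    aFun s (t + 1) (s ⟨t, ht⟩) = ⟨m + t, by omega⟩ := by
  simp [aFun, ht]

lemma aFun_succ_ne (s : Fin n → Fin m) {t : ℕ} (ht : t < n) {i : Fin m}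
    (hne : s ⟨t, ht⟩ ≠ i) : aFun s (t + 1) i = aFun s t i := by
  simp [aFun, ht, hne]

end PosChar
section ItemPos

variable {m n : ℕ}

/-- Position of the item token `o` at time `8*t + q` of the scaffold solution. -/
def itemPos (s : Fin n → Fin m) (t q : ℕ) : Option (Fin m) → PV m n
  | none =>
      if ht : t < n then
        if q = 0 then none
        else if q = 1 ∨ q = 7 then some (Sum.inl ⟨t, ht⟩, 0)
        else some (Sum.inl ⟨t, ht⟩, 1)
      else none
  | some i =>
      if ht : t < n then
        if s ⟨t, ht⟩ = i then
          if q ≤ 1 then some (Sum.inr (Sum.inl (aFun s t i)), 0)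
          else if q = 2 ∨ q = 6 then none
          else if q = 7 then some (Sum.inr (Sum.inl (aFun s (t + 1) i)), 0)
          else some (Sum.inl ⟨t, ht⟩, 0)
        else some (Sum.inr (Sum.inl (aFun s t i)), 0)
      else some (Sum.inr (Sum.inl (aFun s t i)), 0)

lemma itemPos_none_zero (s : Fin n → Fin m) (t : ℕ) :
    itemPos s t 0 none = none := by
  by_cases ht : t < n <;> simp [itemPos, ht]

lemma itemPos_some_zero (s : Fin n → Fin m) (t : ℕ) (i : Fin m) :
    itemPos s t 0 (some i) = some (Sum.inr (Sum.inl (aFun s t i)), 0) := by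
  by_cases ht : t < n
  · by_cases hi : s ⟨t, ht⟩ = i <;> simp [itemPos, ht, hi]
  · simp [itemPos, ht]

/-- `(w^t, 1)` is only touched at times `8t+1` and `8t+7`. -/
lemma miss_inl1 (s : Fin n → Fin m) {t : ℕ} (ht : t < n) (t' : Fin n) (r' : Fin 4)
    {T : ℕ} (hT1 : 8 * t + 2 ≤ T) (hT2 : T ≤ 8 * t + 6) :
    posE (xB s t' r') (yB s t' r') (dOf t' r') T ≠ some (Sum.inl ⟨t, ht⟩, 1) := by
  intro heq
  obtain ⟨he, hd⟩ := posE_inl_char heq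
  have h4 := r'.isLt
  have he' : t'.val = t := he
  rcases hd with ⟨hr, ha⟩ | ⟨hr, ha⟩ <;> omega

/-- `(w^t, 0)` is untouched strictly inside the epoch. -/
lemma miss_inl0_mid (s : Fin n → Fin m) {t : ℕ} (ht : t < n) (t' : Fin n) (r' : Fin 4)
    {T : ℕ} (hT1 : 8 * t + 3 ≤ T) (hT2 : T ≤ 8 * t + 5) :
    posE (xB s t' r') (yB s t' r') (dOf t' r') T ≠ some (Sum.inl ⟨t, ht⟩, 0) := by
  intro heq
  obtain ⟨he, hd⟩ := posE_inl_char heq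
  have h4 := r'.isLt
  have he' : t'.val = t := he
  rcases hd with ⟨hr, ha⟩ | ⟨hr, ha⟩ <;> omega

/-- The slot vertex of an inactive item is never touched during the epoch. -/
lemma miss_inactive (s : Fin n → Fin m) {t : ℕ} (ht : t < n) {i : Fin m}
    (hni : s ⟨t, ht⟩ ≠ i) (t' : Fin n) (r' : Fin 4) {T : ℕ}
    (hT1 : 8 * t ≤ T) (hT2 : T ≤ 8 * t + 8) :
    posE (xB s t' r') (yB s t' r') (dOf t' r') T ≠
      some (Sum.inr (Sum.inl (aFun s t i)), 0) := by
  intro heq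
  have h4 := r'.isLt
  rcases posE_slot_char heq with ⟨hr, hA, hTt⟩ | ⟨hr, hA, hTt⟩
  · have htt : t'.val = t := by omega
    apply hni
    rw [htt] at hA
    have h5 : s t' = i := aFun_inj s t hA.symm
    rw [← h5]
    congr 1
    exact (Fin.ext htt).symm
  · have := aFun_val_lt s t i
    omega

/-- Characterize hits of the slot vertex of the active item (before it moves). -/
lemma slot_act_char (s : Fin n → Fin m) {t : ℕ} (ht : t < n) {i : Fin m}
    (hi : s ⟨t, ht⟩ = i) (t' : Fin n) (r' : Fin 4) {T : ℕ}
    (hT1 : 8 * t ≤ T) (hT2 : T ≤ 8 * t + 2)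
    (heq : posE (xB s t' r') (yB s t' r') (dOf t' r') T =
      some (Sum.inr (Sum.inl (aFun s t i)), 0)) :
    t'.val = t ∧ r'.val = 0 ∧ T = 8 * t + 2 := by
  have h4 := r'.isLt
  rcases posE_slot_char heq with ⟨hr, hA, hTt⟩ | ⟨hr, hA, hTt⟩
  · exact ⟨by omega, hr, by omega⟩
  · have := aFun_val_lt s t i
    omega

/-- Characterize hits of the new slot vertex `s^{m+t}₁`. -/
lemma slot_new_char (s : Fin n → Fin m) {t : ℕ} {A : Fin (m + n)} (hA : A.val = m + t)
    (t' : Fin n) (r' : Fin 4) {T : ℕ} (hT2 : T ≤ 8 * t + 8)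
    (heq : posE (xB s t' r') (yB s t' r') (dOf t' r') T =
      some (Sum.inr (Sum.inl A), 0)) :
    t'.val = t ∧ r'.val = 3 ∧ T = 8 * t + 6 := by
  have h4 := r'.isLt
  rcases posE_slot_char heq with ⟨hr, hA', hTt⟩ | ⟨hr, hA', hTt⟩
  · have hv : (aFun s t'.val (s t')).val = m + t := by rw [← hA']; exact hA
    have := aFun_val_lt s t'.val (s t')
    omega
  · exact ⟨by omega, hr, by omega⟩

end ItemPos
section StepLemma

variable {m n : ℕ}

private def R0 : Fin 4 := ⟨0, by norm_num⟩
private def R1 : Fin 4 := ⟨1, by norm_num⟩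
private def R2 : Fin 4 := ⟨2, by norm_num⟩
private def R3 : Fin 4 := ⟨3, by norm_num⟩

set_option maxHeartbeats 1000000 in
lemma step_round (s : Fin n → Fin m) (o : Option (Fin m)) (t q : ℕ)
    (ht : t < n) (hq : q < 8) :
    ((List.ofFn fun t' : Fin n => List.ofFn fun r : Fin 4 =>
        (posE (xB s t' r) (yB s t' r) (dOf t' r) (8 * t + q),
         posE (xB s t' r) (yB s t' r) (dOf t' r) (8 * t + q + 1))).flatten).foldl
      (fun v e => swapV e v) (itemPos s t q o) =
      (if q = 7 then itemPos s (t + 1) 0 o else itemPos s t (q + 1) o) := by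
  have hvt : (⟨t, ht⟩ : Fin n).val = t := rfl
  have hv0 : (R0 : Fin 4).val = 0 := rfl
  have hv1 : (R1 : Fin 4).val = 1 := rfl
  have hv2 : (R2 : Fin 4).val = 2 := rfl
  have hv3 : (R3 : Fin 4).val = 3 := rfl
  rcases o with _ | i
  · -- the root token
    interval_cases q
    · -- q = 0 : swapped with e_{8t+1} entering the root
      rw [if_neg (by norm_num : ¬(0:ℕ) = 7), itemPos_none_zero,
          show itemPos s t (0+1) none = some (Sum.inl ⟨t, ht⟩, 0) from by simp [itemPos, ht]]
      refine roundFold_single _ _ _ ?_ ⟨t, ht⟩ R0 ?_ ?_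
      · simp
      · have hd : dOf (⟨t, ht⟩ : Fin n) R0 = 8 * t + 2 * 0 + 1 := rfl
        rw [posE_lt (show 8 * t + 0 < dOf (⟨t, ht⟩ : Fin n) R0 from by rw [hd]; omega),
            posE_eqd (show 8 * t + 0 + 1 = dOf (⟨t, ht⟩ : Fin n) R0 from by rw [hd]),
            show xB s (⟨t, ht⟩ : Fin n) R0 = Sum.inl ⟨t, ht⟩ from rfl,
            show dOf (⟨t, ht⟩ : Fin n) R0 - (8 * t + 0) - 1 = 0 from by rw [hd]; omega]
      · intro t' r' hne
        have h4 := r'.isLt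
        refine ⟨?_, ?_, ?_, ?_⟩
        · intro heq; have hT := posE_none_char heq; omega
        · intro heq; have hT := posE_none_char heq
          exact hne ⟨Fin.ext (by omega), Fin.ext (by omega)⟩
        · intro heq
          obtain ⟨he, hd⟩ := posE_inl_char heq
          have he' : t'.val = t := he
          rcases hd with ⟨hr, ha⟩ | ⟨hr, ha⟩ <;>
            exact hne ⟨Fin.ext (by omega), Fin.ext (by omega)⟩
        · intro heq
          obtain ⟨he, hd⟩ := posE_inl_char heq
          have he' : t'.val = t := he
          rcases hd with ⟨hr, ha⟩ | ⟨hr, ha⟩ <;>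
            exact hne ⟨Fin.ext (by omega), Fin.ext (by omega)⟩
    · -- q = 1 : pushed outwards by e_{8t+3}
      rw [if_neg (by norm_num : ¬(1:ℕ) = 7),
          show itemPos s t 1 none = some (Sum.inl ⟨t, ht⟩, 0) from by simp [itemPos, ht],
          show itemPos s t (1+1) none = some (Sum.inl ⟨t, ht⟩, 1) from by simp [itemPos, ht]]
      refine roundFold_single _ _ _ ?_ ⟨t, ht⟩ R1 ?_ ?_
      · simp
      · have hd : dOf (⟨t, ht⟩ : Fin n) R1 = 8 * t + 2 * 1 + 1 := rfl
        rw [posE_lt (show 8 * t + 1 < dOf (⟨t, ht⟩ : Fin n) R1 from by rw [hd]; omega),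
            posE_lt (show 8 * t + 1 + 1 < dOf (⟨t, ht⟩ : Fin n) R1 from by rw [hd]; omega),
            show xB s (⟨t, ht⟩ : Fin n) R1 = Sum.inl ⟨t, ht⟩ from rfl,
            show dOf (⟨t, ht⟩ : Fin n) R1 - (8 * t + 1) - 1 = 1 from by rw [hd]; omega,
            show dOf (⟨t, ht⟩ : Fin n) R1 - (8 * t + 1 + 1) - 1 = 0 from by rw [hd]; omega]
      · intro t' r' hne
        have h4 := r'.isLt
        refine ⟨?_, ?_, ?_, ?_⟩ <;>
        · intro heq
          obtain ⟨he, hd⟩ := posE_inl_char heq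
          have he' : t'.val = t := he
          rcases hd with ⟨hr, ha⟩ | ⟨hr, ha⟩ <;>
            exact hne ⟨Fin.ext (by omega), Fin.ext (by omega)⟩
    · -- q = 2 : untouched
      rw [if_neg (by norm_num : ¬(2:ℕ) = 7),
          show itemPos s t 2 none = some (Sum.inl ⟨t, ht⟩, 1) from by simp [itemPos, ht],
          show itemPos s t (2+1) none = some (Sum.inl ⟨t, ht⟩, 1) from by simp [itemPos, ht]]
      exact roundFold_untouched _ _ (fun t' r' =>
        ⟨miss_inl1 s ht t' r' (by omega) (by omega),
         miss_inl1 s ht t' r' (by omega) (by omega)⟩)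
    · -- q = 3 : untouched
      rw [if_neg (by norm_num : ¬(3:ℕ) = 7),
          show itemPos s t 3 none = some (Sum.inl ⟨t, ht⟩, 1) from by simp [itemPos, ht],
          show itemPos s t (3+1) none = some (Sum.inl ⟨t, ht⟩, 1) from by simp [itemPos, ht]]
      exact roundFold_untouched _ _ (fun t' r' =>
        ⟨miss_inl1 s ht t' r' (by omega) (by omega),
         miss_inl1 s ht t' r' (by omega) (by omega)⟩)
    · -- q = 4 : untouched
      rw [if_neg (by norm_num : ¬(4:ℕ) = 7),
          show itemPos s t 4 none = some (Sum.inl ⟨t, ht⟩, 1) from by simp [itemPos, ht],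
          show itemPos s t (4+1) none = some (Sum.inl ⟨t, ht⟩, 1) from by simp [itemPos, ht]]
      exact roundFold_untouched _ _ (fun t' r' =>
        ⟨miss_inl1 s ht t' r' (by omega) (by omega),
         miss_inl1 s ht t' r' (by omega) (by omega)⟩)
    · -- q = 5 : untouched
      rw [if_neg (by norm_num : ¬(5:ℕ) = 7),
          show itemPos s t 5 none = some (Sum.inl ⟨t, ht⟩, 1) from by simp [itemPos, ht],
          show itemPos s t (5+1) none = some (Sum.inl ⟨t, ht⟩, 1) from by simp [itemPos, ht]]
      exact roundFold_untouched _ _ (fun t' r' =>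
        ⟨miss_inl1 s ht t' r' (by omega) (by omega),
         miss_inl1 s ht t' r' (by omega) (by omega)⟩)
    · -- q = 6 : pulled back towards the root by e_{8t+5} moving outwards
      rw [if_neg (by norm_num : ¬(6:ℕ) = 7),
          show itemPos s t 6 none = some (Sum.inl ⟨t, ht⟩, 1) from by simp [itemPos, ht],
          show itemPos s t (6+1) none = some (Sum.inl ⟨t, ht⟩, 0) from by simp [itemPos, ht]]
      refine roundFold_single _ _ _ ?_ ⟨t, ht⟩ R2 ?_ ?_
      · simp
      · have hd : dOf (⟨t, ht⟩ : Fin n) R2 = 8 * t + 2 * 2 + 1 := rfl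
        rw [posE_gtd (show dOf (⟨t, ht⟩ : Fin n) R2 < 8 * t + 6 from by rw [hd]; omega),
            posE_gtd (show dOf (⟨t, ht⟩ : Fin n) R2 < 8 * t + 6 + 1 from by rw [hd]; omega),
            show yB s (⟨t, ht⟩ : Fin n) R2 = Sum.inl ⟨t, ht⟩ from rfl,
            show 8 * t + 6 - dOf (⟨t, ht⟩ : Fin n) R2 - 1 = 0 from by rw [hd]; omega,
            show 8 * t + 6 + 1 - dOf (⟨t, ht⟩ : Fin n) R2 - 1 = 1 from by rw [hd]; omega]
      · intro t' r' hne
        have h4 := r'.isLt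
        refine ⟨?_, ?_, ?_, ?_⟩ <;>
        · intro heq
          obtain ⟨he, hd⟩ := posE_inl_char heq
          have he' : t'.val = t := he
          rcases hd with ⟨hr, ha⟩ | ⟨hr, ha⟩ <;>
            exact hne ⟨Fin.ext (by omega), Fin.ext (by omega)⟩
    · -- q = 7 : swapped back to the root by e_{8t+7}
      rw [if_pos rfl, itemPos_none_zero,
          show itemPos s t 7 none = some (Sum.inl ⟨t, ht⟩, 0) from by simp [itemPos, ht]]
      refine roundFold_single _ _ _ ?_ ⟨t, ht⟩ R3 ?_ ?_
      · simp
      · have hd : dOf (⟨t, ht⟩ : Fin n) R3 = 8 * t + 2 * 3 + 1 := rfl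
        rw [posE_eqd (show 8 * t + 7 = dOf (⟨t, ht⟩ : Fin n) R3 from by rw [hd]),
            posE_gtd (show dOf (⟨t, ht⟩ : Fin n) R3 < 8 * t + 7 + 1 from by rw [hd]; omega),
            show yB s (⟨t, ht⟩ : Fin n) R3 = Sum.inl ⟨t, ht⟩ from rfl,
            show 8 * t + 7 + 1 - dOf (⟨t, ht⟩ : Fin n) R3 - 1 = 0 from by rw [hd]; omega]
      · intro t' r' hne
        have h4 := r'.isLt
        refine ⟨?_, ?_, ?_, ?_⟩
        · intro heq
          obtain ⟨he, hd⟩ := posE_inl_char heq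
          have he' : t'.val = t := he
          rcases hd with ⟨hr, ha⟩ | ⟨hr, ha⟩ <;>
            exact hne ⟨Fin.ext (by omega), Fin.ext (by omega)⟩
        · intro heq
          obtain ⟨he, hd⟩ := posE_inl_char heq
          have he' : t'.val = t := he
          rcases hd with ⟨hr, ha⟩ | ⟨hr, ha⟩ <;>
            exact hne ⟨Fin.ext (by omega), Fin.ext (by omega)⟩
        · intro heq; have hT := posE_none_char heq
          exact hne ⟨Fin.ext (by omega), Fin.ext (by omega)⟩
        · intro heq; have hT := posE_none_char heq
          exact hne ⟨Fin.ext (by omega), Fin.ext (by omega)⟩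
  · -- an item token
    by_cases hi : s ⟨t, ht⟩ = i
    · -- the active item of epoch t
      have hA : (aFun s (t + 1) i).val = m + t := by
        rw [← hi, aFun_succ_self s ht]
      interval_cases q
      · -- q = 0 : untouched
        rw [if_neg (by norm_num : ¬(0:ℕ) = 7),
            show itemPos s t 0 (some i) = some (Sum.inr (Sum.inl (aFun s t i)), 0) from
              by simp [itemPos, ht, hi],
            show itemPos s t (0+1) (some i) = some (Sum.inr (Sum.inl (aFun s t i)), 0) from
              by simp [itemPos, ht, hi]]
        refine roundFold_untouched _ _ (fun t' r' => ⟨?_, ?_⟩) <;>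
        · intro heq
          obtain ⟨h1, h2, h3⟩ := slot_act_char s ht hi t' r' (by omega) (by omega) heq
          omega
      · -- q = 1 : moved to the root by e_{8t+1}
        rw [if_neg (by norm_num : ¬(1:ℕ) = 7),
            show itemPos s t 1 (some i) = some (Sum.inr (Sum.inl (aFun s t i)), 0) from
              by simp [itemPos, ht, hi],
            show itemPos s t (1+1) (some i) = none from by simp [itemPos, ht, hi]]
        refine roundFold_single _ _ _ ?_ ⟨t, ht⟩ R0 ?_ ?_
        · simp
        · have hd : dOf (⟨t, ht⟩ : Fin n) R0 = 8 * t + 2 * 0 + 1 := rfl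
          rw [posE_eqd (show 8 * t + 1 = dOf (⟨t, ht⟩ : Fin n) R0 from by rw [hd]),
              posE_gtd (show dOf (⟨t, ht⟩ : Fin n) R0 < 8 * t + 1 + 1 from by rw [hd]; omega),
              show yB s (⟨t, ht⟩ : Fin n) R0 =
                Sum.inr (Sum.inl (aFun s t (s ⟨t, ht⟩))) from rfl, hi,
              show 8 * t + 1 + 1 - dOf (⟨t, ht⟩ : Fin n) R0 - 1 = 0 from by rw [hd]; omega]
        · intro t' r' hne
          have h4 := r'.isLt
          refine ⟨?_, ?_, ?_, ?_⟩
          · intro heq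
            obtain ⟨h1, h2, h3⟩ := slot_act_char s ht hi t' r' (by omega) (by omega) heq
            exact hne ⟨Fin.ext (by omega), Fin.ext (by omega)⟩
          · intro heq
            obtain ⟨h1, h2, h3⟩ := slot_act_char s ht hi t' r' (by omega) (by omega) heq
            exact hne ⟨Fin.ext (by omega), Fin.ext (by omega)⟩
          · intro heq; have hT := posE_none_char heq
            exact hne ⟨Fin.ext (by omega), Fin.ext (by omega)⟩
          · intro heq; have hT := posE_none_char heq
            exact hne ⟨Fin.ext (by omega), Fin.ext (by omega)⟩
      · -- q = 2 : moved onto the swap branch by e_{8t+3}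
        rw [if_neg (by norm_num : ¬(2:ℕ) = 7),
            show itemPos s t 2 (some i) = none from by simp [itemPos, ht, hi],
            show itemPos s t (2+1) (some i) = some (Sum.inl ⟨t, ht⟩, 0) from
              by simp [itemPos, ht, hi]]
        refine roundFold_single _ _ _ ?_ ⟨t, ht⟩ R1 ?_ ?_
        · simp
        · have hd : dOf (⟨t, ht⟩ : Fin n) R1 = 8 * t + 2 * 1 + 1 := rfl
          rw [posE_lt (show 8 * t + 2 < dOf (⟨t, ht⟩ : Fin n) R1 from by rw [hd]; omega),
              posE_eqd (show 8 * t + 2 + 1 = dOf (⟨t, ht⟩ : Fin n) R1 from by rw [hd]),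
              show xB s (⟨t, ht⟩ : Fin n) R1 = Sum.inl ⟨t, ht⟩ from rfl,
              show dOf (⟨t, ht⟩ : Fin n) R1 - (8 * t + 2) - 1 = 0 from by rw [hd]; omega]
        · intro t' r' hne
          have h4 := r'.isLt
          refine ⟨?_, ?_, ?_, ?_⟩
          · intro heq; have hT := posE_none_char heq
            exact hne ⟨Fin.ext (by omega), Fin.ext (by omega)⟩
          · intro heq; have hT := posE_none_char heq
            exact hne ⟨Fin.ext (by omega), Fin.ext (by omega)⟩
          · intro heq
            obtain ⟨he, hd⟩ := posE_inl_char heq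
            have he' : t'.val = t := he
            rcases hd with ⟨hr, ha⟩ | ⟨hr, ha⟩ <;>
              exact hne ⟨Fin.ext (by omega), Fin.ext (by omega)⟩
          · intro heq
            obtain ⟨he, hd⟩ := posE_inl_char heq
            have he' : t'.val = t := he
            rcases hd with ⟨hr, ha⟩ | ⟨hr, ha⟩ <;>
              exact hne ⟨Fin.ext (by omega), Fin.ext (by omega)⟩
      · -- q = 3 : untouched
        rw [if_neg (by norm_num : ¬(3:ℕ) = 7),
            show itemPos s t 3 (some i) = some (Sum.inl ⟨t, ht⟩, 0) from
              by simp [itemPos, ht, hi],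
            show itemPos s t (3+1) (some i) = some (Sum.inl ⟨t, ht⟩, 0) from
              by simp [itemPos, ht, hi]]
        exact roundFold_untouched _ _ (fun t' r' =>
          ⟨miss_inl0_mid s ht t' r' (by omega) (by omega),
           miss_inl0_mid s ht t' r' (by omega) (by omega)⟩)
      · -- q = 4 : untouched
        rw [if_neg (by norm_num : ¬(4:ℕ) = 7),
            show itemPos s t 4 (some i) = some (Sum.inl ⟨t, ht⟩, 0) from
              by simp [itemPos, ht, hi],
            show itemPos s t (4+1) (some i) = some (Sum.inl ⟨t, ht⟩, 0) from
              by simp [itemPos, ht, hi]]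
        exact roundFold_untouched _ _ (fun t' r' =>
          ⟨miss_inl0_mid s ht t' r' (by omega) (by omega),
           miss_inl0_mid s ht t' r' (by omega) (by omega)⟩)
      · -- q = 5 : moved back to the root by e_{8t+5}
        rw [if_neg (by norm_num : ¬(5:ℕ) = 7),
            show itemPos s t 5 (some i) = some (Sum.inl ⟨t, ht⟩, 0) from
              by simp [itemPos, ht, hi],
            show itemPos s t (5+1) (some i) = none from by simp [itemPos, ht, hi]]
        refine roundFold_single _ _ _ ?_ ⟨t, ht⟩ R2 ?_ ?_
        · simp
        · have hd : dOf (⟨t, ht⟩ : Fin n) R2 = 8 * t + 2 * 2 + 1 := rfl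
          rw [posE_eqd (show 8 * t + 5 = dOf (⟨t, ht⟩ : Fin n) R2 from by rw [hd]),
              posE_gtd (show dOf (⟨t, ht⟩ : Fin n) R2 < 8 * t + 5 + 1 from by rw [hd]; omega),
              show yB s (⟨t, ht⟩ : Fin n) R2 = Sum.inl ⟨t, ht⟩ from rfl,
              show 8 * t + 5 + 1 - dOf (⟨t, ht⟩ : Fin n) R2 - 1 = 0 from by rw [hd]; omega]
        · intro t' r' hne
          have h4 := r'.isLt
          refine ⟨?_, ?_, ?_, ?_⟩
          · intro heq
            obtain ⟨he, hd⟩ := posE_inl_char heq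
            have he' : t'.val = t := he
            rcases hd with ⟨hr, ha⟩ | ⟨hr, ha⟩ <;>
              exact hne ⟨Fin.ext (by omega), Fin.ext (by omega)⟩
          · intro heq
            obtain ⟨he, hd⟩ := posE_inl_char heq
            have he' : t'.val = t := he
            rcases hd with ⟨hr, ha⟩ | ⟨hr, ha⟩ <;>
              exact hne ⟨Fin.ext (by omega), Fin.ext (by omega)⟩
          · intro heq; have hT := posE_none_char heq
            exact hne ⟨Fin.ext (by omega), Fin.ext (by omega)⟩
          · intro heq; have hT := posE_none_char heq
            exact hne ⟨Fin.ext (by omega), Fin.ext (by omega)⟩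
      · -- q = 6 : moved to the new slot branch by e_{8t+7}
        rw [if_neg (by norm_num : ¬(6:ℕ) = 7),
            show itemPos s t 6 (some i) = none from by simp [itemPos, ht, hi],
            show itemPos s t (6+1) (some i) =
                some (Sum.inr (Sum.inl (aFun s (t + 1) i)), 0) from
              by simp [itemPos, ht, hi]]
        refine roundFold_single _ _ _ ?_ ⟨t, ht⟩ R3 ?_ ?_
        · simp
        · have hd : dOf (⟨t, ht⟩ : Fin n) R3 = 8 * t + 2 * 3 + 1 := rfl
          rw [posE_lt (show 8 * t + 6 < dOf (⟨t, ht⟩ : Fin n) R3 from by rw [hd]; omega),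
              posE_eqd (show 8 * t + 6 + 1 = dOf (⟨t, ht⟩ : Fin n) R3 from by rw [hd]),
              show xB s (⟨t, ht⟩ : Fin n) R3 =
                Sum.inr (Sum.inl (⟨m + t, by omega⟩ : Fin (m + n))) from rfl,
              show dOf (⟨t, ht⟩ : Fin n) R3 - (8 * t + 6) - 1 = 0 from by rw [hd]; omega]
          have hmk : (⟨m + t, by omega⟩ : Fin (m + n)) = aFun s (t + 1) i :=
            Fin.ext hA.symm
          exact congrArg (fun z : Fin (m + n) =>
            ((some (Sum.inr (Sum.inl z), 0), none) : PV m n × PV m n)) hmk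
        · intro t' r' hne
          have h4 := r'.isLt
          refine ⟨?_, ?_, ?_, ?_⟩
          · intro heq; have hT := posE_none_char heq
            exact hne ⟨Fin.ext (by omega), Fin.ext (by omega)⟩
          · intro heq; have hT := posE_none_char heq
            exact hne ⟨Fin.ext (by omega), Fin.ext (by omega)⟩
          · intro heq
            obtain ⟨h1, h2, h3⟩ := slot_new_char s hA t' r' (by omega) heq
            exact hne ⟨Fin.ext (by omega), Fin.ext (by omega)⟩
          · intro heq
            obtain ⟨h1, h2, h3⟩ := slot_new_char s hA t' r' (by omega) heq
            exact hne ⟨Fin.ext (by omega), Fin.ext (by omega)⟩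
      · -- q = 7 : untouched
        rw [if_pos rfl, itemPos_some_zero,
            show itemPos s t 7 (some i) =
                some (Sum.inr (Sum.inl (aFun s (t + 1) i)), 0) from
              by simp [itemPos, ht, hi]]
        refine roundFold_untouched _ _ (fun t' r' => ⟨?_, ?_⟩) <;>
        · intro heq
          obtain ⟨h1, h2, h3⟩ := slot_new_char s hA t' r' (by omega) heq
          omega
    · -- an inactive item: never touched during epoch t
      have hval : itemPos s t q (some i) = some (Sum.inr (Sum.inl (aFun s t i)), 0) := by
        simp [itemPos, ht, hi]
      have hval2 : (if q = 7 then itemPos s (t + 1) 0 (some i)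
            else itemPos s t (q + 1) (some i)) =
          some (Sum.inr (Sum.inl (aFun s t i)), 0) := by
        split_ifs
        · rw [itemPos_some_zero, aFun_succ_ne s ht hi]
        · simp [itemPos, ht, hi]
      rw [hval, hval2]
      exact roundFold_untouched _ _ (fun t' r' =>
        ⟨miss_inactive s ht hi t' r' (by omega) (by omega),
         miss_inactive s ht hi t' r' (by omega) (by omega)⟩)

end StepLemma
section Assembly

variable {m n : ℕ}

lemma scaffold_getElem (s : Fin n → Fin m) (τ : ℕ) (hτ : τ < (scaffold s).length) :
    (scaffold s)[τ] =
      (List.ofFn fun t' : Fin n => List.ofFn fun r : Fin 4 =>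
        (posE (xB s t' r) (yB s t' r) (dOf t' r) τ,
         posE (xB s t' r) (yB s t' r) (dOf t' r) (τ + 1))).flatten := by
  unfold scaffold at hτ ⊢
  rw [List.getElem_ofFn]

lemma scaffold_prefix (s : Fin n → Fin m) (o : Option (Fin m)) :
    ∀ τ : ℕ, τ ≤ 8 * n →
      ((scaffold s).take τ).foldl (fun v R => R.foldl (fun v e => swapV e v) v)
          (itemInit s o) = itemPos s (τ / 8) (τ % 8) o := by
  intro τ
  induction τ with
  | zero =>
    intro _
    simp only [List.take_zero, List.foldl_nil]
    rcases o with _ | i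
    · rw [show (0:ℕ)/8 = 0 from rfl, show (0:ℕ)%8 = 0 from rfl, itemPos_none_zero]; rfl
    · rw [show (0:ℕ)/8 = 0 from rfl, show (0:ℕ)%8 = 0 from rfl, itemPos_some_zero]; rfl
  | succ τ ih =>
    intro hτ
    have hτ' : τ < 8 * n := hτ
    have hlen : τ < (scaffold s).length := by
      unfold scaffold; rw [List.length_ofFn]; exact hτ'
    rw [List.take_succ, List.getElem?_eq_getElem hlen, Option.toList_some,
        List.foldl_append, ih (by omega)]
    simp only [List.foldl_cons, List.foldl_nil]
    rw [scaffold_getElem s τ hlen]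
    have ht : τ / 8 < n := by omega
    have hq : τ % 8 < 8 := by omega
    have hstep := step_round s o (τ / 8) (τ % 8) ht hq
    rw [show 8 * (τ / 8) + τ % 8 = τ from by omega] at hstep
    rw [hstep]
    by_cases h7 : τ % 8 = 7
    · rw [if_pos h7, show (τ+1)/8 = τ/8 + 1 from by omega, show (τ+1)%8 = 0 from by omega]
    · rw [if_neg h7, show (τ+1)/8 = τ/8 from by omega,
          show (τ+1)%8 = τ%8+1 from by omega]

lemma applySched_scaffold_item (s : Fin n → Fin m) (o : Option (Fin m)) :
    applySched (scaffold s) (itemInit s o) = itemPos s n 0 o := by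
  have h := scaffold_prefix s o (8 * n) le_rfl
  rw [List.take_of_length_le (by unfold scaffold; rw [List.length_ofFn])] at h
  rw [show (8*n)/8 = n from by omega, show (8*n)%8 = 0 from by omega] at h
  exact h

end Assembly
theorem scaffold_item_tokens_final_positions {m n : ℕ} (s : Fin n → Fin m) :
    Set.range (fun o : Option (Fin m) => applySched (scaffold s) (itemInit s o)) =
      insert (none : PV m n)
        (Set.range fun i : Fin m => some (Sum.inr (Sum.inl (aFun s n i)), 0)) := by
  ext x
  simp only [Set.mem_range, Set.mem_insert_iff]
  constructor
  · rintro ⟨o, rfl⟩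
    rw [applySched_scaffold_item]
    rcases o with _ | i
    · left; rw [itemPos_none_zero]
    · right; exact ⟨i, (itemPos_some_zero s n i).symm⟩
  · rintro (rfl | ⟨i, rfl⟩)
    · exact ⟨none, by rw [applySched_scaffold_item, itemPos_none_zero]⟩
    · exact ⟨some i, by rw [applySched_scaffold_item, itemPos_some_zero]⟩

end ParallelTS
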